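/- Let M be a set and let r be a function from the finite subsets of M to the nonnegative real numbers satisfying (R1) r(∅) = 0, monotonicity r(x) ≤ r(x ∪ y) for all finite x, y ⊆ M, and submodularity (SUBM) r(x ∪ y ∪ z) + r(z) ≤ r(x ∪ z) + r(y ∪ z) for all finite x, y, z ⊆ M. Then r is a diversity rank function on M, i.e., it additionally satisfies (right R2) r(x ∪ y) ≤ r(x) + r(y), (R3) if r(x ∪ y) = r(x) then r(x ∪ y ∪ z) = r(x ∪ z), and (R4) if r(x ∪ y ∪ z) = r(x) + r(y ∪ z) then r(x ∪ y) = r(x) + r(y), for all finite x, y, z ⊆ M. -/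
import Mathlib

theorem subm_implies_diversity_rank {α : Type*} [DecidableEq α] (rk : Finset α → ℝ)
    (hnn : ∀ x : Finset α, 0 ≤ rk x)
    (hR1 : rk ∅ = 0)
    (hmono : ∀ x y : Finset α, rk x ≤ rk (x ∪ y))
    (hsubm : ∀ x y z : Finset α, rk (x ∪ y ∪ z) + rk z ≤ rk (x ∪ z) + rk (y ∪ z)) :
    (∀ x y : Finset α, rk (x ∪ y) ≤ rk x + rk y) ∧
    (∀ x y z : Finset α, rk (x ∪ y) = rk x → rk (x ∪ y ∪ z) = rk (x ∪ z)) ∧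
    (∀ x y z : Finset α, rk (x ∪ y ∪ z) = rk x + rk (y ∪ z) →
      rk (x ∪ y) = rk x + rk y) := by
  have hR2 : ∀ x y : Finset α, rk (x ∪ y) ≤ rk x + rk y := by
    intro x y
    have h := hsubm x y ∅
    simp [hR1] at h
    exact h
  refine ⟨hR2, ?_, ?_⟩
  · intro x y z h
    have h1 := hsubm y z x
    rw [show y ∪ z ∪ x = x ∪ y ∪ z by ac_rfl, show y ∪ x = x ∪ y by ac_rfl,
      show z ∪ x = x ∪ z by ac_rfl, h] at h1
    have h2 := hmono (x ∪ z) y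
    rw [show x ∪ z ∪ y = x ∪ y ∪ z by ac_rfl] at h2
    linarith
  · intro x y z h
    have h1 := hsubm x z y
    rw [show x ∪ z ∪ y = x ∪ y ∪ z by ac_rfl, show z ∪ y = y ∪ z by ac_rfl, h] at h1
    have h2 := hR2 x y
    linarith
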